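/- arXiv:1601.01192 — 2 statements merged into one kernel-verified Lean document; each statement's English description precedes it below -/
import Mathlib

section
/- Let n ≥ 1 and let ω ∈ ℝⁿ \ ℚⁿ with sequence of periods T_i(ω). Then for every i ∈ ℕ one has ‖T_i(ω)·ω‖_ℤ ≥ 1/(T_i(ω) + T_{i+1}(ω)). -/
open Finset

/-- Sup norm on `ℝⁿ`. -/
noncomputable def supNorm {n : ℕ} (x : Fin n → ℝ) : ℝ := ⨆ i, |x i|

/-- Sup-norm distance from `x ∈ ℝⁿ` to the lattice `ℤⁿ`. -/
noncomputable def distZ {n : ℕ} (x : Fin n → ℝ) : ℝ :=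
  sInf {r : ℝ | ∃ k : Fin n → ℤ, r = supNorm (fun i => x i - k i)}

/-- Distance from a real number to `ℤ`. -/
noncomputable def distZ1 (t : ℝ) : ℝ := sInf {r : ℝ | ∃ m : ℤ, r = |t - m|}

/-- `ω ∈ ℚⁿ`. -/
def IsRationalVec {n : ℕ} (ω : Fin n → ℝ) : Prop := ∀ i, ∃ q : ℚ, (q : ℝ) = ω i

/-- `ω` is resonant: some nonzero integer vector `k` has `⟨k, ω⟩ ∈ ℤ`. -/
def Resonant {n : ℕ} (ω : Fin n → ℝ) : Prop :=
  ∃ k : Fin n → ℤ, k ≠ 0 ∧ ∃ m : ℤ, ∑ i, (k i : ℝ) * ω i = (m : ℝ)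

/-- The sequence of periods of `ω`. -/
noncomputable def periods {n : ℕ} (ω : Fin n → ℝ) : ℕ → ℕ
  | 0 => 1
  | i + 1 => sInf {T : ℕ | 1 ≤ T ∧
      distZ (fun j => (T : ℝ) * ω j) < distZ (fun j => (periods ω i : ℝ) * ω j)}

/-- The resonance module of `ω`, as a subgroup of `ℤⁿ`. -/
def resModule {n : ℕ} (ω : Fin n → ℝ) : AddSubgroup (Fin n → ℤ) where
  carrier := {k | ∃ m : ℤ, ∑ i, (k i : ℝ) * ω i = (m : ℝ)}
  zero_mem' := ⟨0, by simp⟩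
  add_mem' := by
    rintro a b ⟨ma, ha⟩ ⟨mb, hb⟩
    refine ⟨ma + mb, ?_⟩
    push_cast
    simp only [Pi.add_apply, Int.cast_add, add_mul, Finset.sum_add_distrib, ha, hb]
  neg_mem' := by
    rintro a ⟨m, hm⟩
    refine ⟨-m, ?_⟩
    push_cast
    simp [neg_mul, Finset.sum_neg_distrib, hm]
section aux

variable {n : ℕ}

lemma supNorm_nonneg (x : Fin n → ℝ) : 0 ≤ supNorm x :=
  Real.iSup_nonneg fun _ => abs_nonneg _

lemma le_supNorm (x : Fin n → ℝ) (i : Fin n) : |x i| ≤ supNorm x := by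
  unfold supNorm
  exact le_ciSup (Set.finite_range fun i => |x i|).bddAbove i

lemma supNorm_le [Nonempty (Fin n)] {x : Fin n → ℝ} {c : ℝ} (h : ∀ i, |x i| ≤ c) :
    supNorm x ≤ c := ciSup_le h

lemma exists_supNorm_eq [Nonempty (Fin n)] (x : Fin n → ℝ) : ∃ i, supNorm x = |x i| := by
  obtain ⟨i, hi⟩ := Finite.exists_max (fun i => |x i|)
  exact ⟨i, le_antisymm (ciSup_le hi) (le_supNorm x i)⟩

lemma supNorm_lt [Nonempty (Fin n)] {x : Fin n → ℝ} {c : ℝ} (h : ∀ i, |x i| < c) :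
    supNorm x < c := by
  obtain ⟨i, hi⟩ := exists_supNorm_eq x
  rw [hi]; exact h i

lemma distZ_setNonempty (x : Fin n → ℝ) :
    {r : ℝ | ∃ k : Fin n → ℤ, r = supNorm (fun i => x i - k i)}.Nonempty :=
  ⟨_, 0, rfl⟩

lemma distZ_setBddBelow (x : Fin n → ℝ) :
    BddBelow {r : ℝ | ∃ k : Fin n → ℤ, r = supNorm (fun i => x i - k i)} := by
  refine ⟨0, ?_⟩
  rintro r ⟨k, rfl⟩
  exact supNorm_nonneg _

lemma distZ_le (x : Fin n → ℝ) (k : Fin n → ℤ) :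
    distZ x ≤ supNorm (fun i => x i - k i) :=
  csInf_le (distZ_setBddBelow x) ⟨k, rfl⟩

lemma distZ_eq_round [Nonempty (Fin n)] (x : Fin n → ℝ) :
    distZ x = supNorm (fun i => x i - round (x i)) := by
  refine le_antisymm (distZ_le x fun i => round (x i)) ?_
  refine le_csInf (distZ_setNonempty x) ?_
  rintro r ⟨k, rfl⟩
  refine supNorm_le fun i => ?_
  exact (round_le (x i) (k i)).trans (le_supNorm (fun i => x i - k i) i)

lemma distZ1_le_distZ (x : Fin n → ℝ) (j : Fin n) : distZ1 (x j) ≤ distZ x := by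
  refine le_csInf (distZ_setNonempty x) ?_
  rintro r ⟨k, rfl⟩
  calc distZ1 (x j) ≤ |x j - k j| := csInf_le ⟨0, by rintro r ⟨m, rfl⟩; exact abs_nonneg _⟩
        ⟨k j, rfl⟩
    _ ≤ _ := le_supNorm (fun i => x i - k i) j

lemma distZ1_pos {t : ℝ} (h : Irrational t) : 0 < distZ1 t := by
  have h1 : distZ1 t = |t - round t| := by
    refine le_antisymm (csInf_le ⟨0, by rintro r ⟨m, rfl⟩; exact abs_nonneg _⟩ ⟨round t, rfl⟩) ?_
    refine le_csInf ⟨_, round t, rfl⟩ ?_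
    rintro r ⟨m, rfl⟩
    exact round_le t m
  rw [h1, abs_pos, sub_ne_zero]
  exact h.ne_int _

lemma distZ_pos {ω : Fin n → ℝ} (hω : ¬ IsRationalVec ω) {T : ℕ} (hT : 1 ≤ T) :
    0 < distZ (fun j => (T : ℝ) * ω j) := by
  rw [IsRationalVec] at hω
  push_neg at hω
  obtain ⟨j, hj⟩ := hω
  have hirr : Irrational (ω j) := fun ⟨q, hq⟩ => hj q hq
  have h2 : Irrational ((T : ℝ) * ω j) := hirr.natCast_mul (by omega)
  exact lt_of_lt_of_le (distZ1_pos h2) (distZ1_le_distZ (fun j => (T : ℝ) * ω j) j)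

/-- Dirichlet pigeonhole: some positive multiple of `ω` is within `d` of the lattice. -/
lemma exists_small [Nonempty (Fin n)] (ω : Fin n → ℝ) {d : ℝ} (hd : 0 < d) :
    ∃ T : ℕ, 1 ≤ T ∧ distZ (fun j => (T : ℝ) * ω j) < d := by
  set M : ℕ := ⌈1/d⌉₊ with hM
  have hM0 : 0 < M := Nat.ceil_pos.2 (by positivity)
  have hMR : (0:ℝ) < M := by exact_mod_cast hM0
  have hfloor : ∀ (a : ℕ) (j : Fin n),
      0 ≤ ⌊(M:ℝ) * Int.fract ((a:ℝ) * ω j)⌋ ∧ ⌊(M:ℝ) * Int.fract ((a:ℝ) * ω j)⌋ < (M:ℤ) := by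
    intro a j
    refine ⟨Int.floor_nonneg.2 (mul_nonneg hMR.le (Int.fract_nonneg _)), ?_⟩
    refine Int.floor_lt.2 ?_
    push_cast
    calc (M:ℝ) * Int.fract ((a:ℝ) * ω j) < M * 1 :=
          mul_lt_mul_of_pos_left (Int.fract_lt_one _) hMR
      _ = M := mul_one _
  let f : Fin (M ^ n + 1) → (Fin n → Fin M) := fun a j =>
    ⟨(⌊(M:ℝ) * Int.fract (((a:ℕ):ℝ) * ω j)⌋).toNat, by
      have h := hfloor a j
      omega⟩
  have hcard : Fintype.card (Fin n → Fin M) < Fintype.card (Fin (M ^ n + 1)) := by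
    simp only [Fintype.card_fun, Fintype.card_fin]
    omega
  obtain ⟨a, b, hab, hfab⟩ := Fintype.exists_ne_map_eq_of_card_lt f hcard
  have key : ∀ a b : Fin (M ^ n + 1), f a = f b → (a : ℕ) < (b : ℕ) →
      ∃ T : ℕ, 1 ≤ T ∧ distZ (fun j => (T : ℝ) * ω j) < d := by
    clear hab hfab a b
    intro a b hfab hlt
    refine ⟨(b : ℕ) - (a : ℕ), by omega, ?_⟩
    have hsub : ((((b:ℕ) - (a:ℕ) : ℕ)) : ℝ) = ((b:ℕ) : ℝ) - ((a:ℕ) : ℝ) := by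
      push_cast [Nat.cast_sub hlt.le]
      ring
    set k : Fin n → ℤ := fun j => ⌊((b:ℕ):ℝ) * ω j⌋ - ⌊((a:ℕ):ℝ) * ω j⌋ with hk
    have hbound : ∀ j, |(((b:ℕ) - (a:ℕ) : ℕ) : ℝ) * ω j - k j| < 1 / M := by
      intro j
      have hfj : f a j = f b j := congrFun hfab j
      have hfla := hfloor a j
      have hflb := hfloor b j
      have h2 : (⌊(M:ℝ) * Int.fract (((a:ℕ):ℝ) * ω j)⌋).toNat
          = (⌊(M:ℝ) * Int.fract (((b:ℕ):ℝ) * ω j)⌋).toNat := congrArg Fin.val hfj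
      have heq : ⌊(M:ℝ) * Int.fract (((a:ℕ):ℝ) * ω j)⌋
          = ⌊(M:ℝ) * Int.fract (((b:ℕ):ℝ) * ω j)⌋ := by omega
      have h3 : |(M:ℝ) * Int.fract (((a:ℕ):ℝ) * ω j) - (M:ℝ) * Int.fract (((b:ℕ):ℝ) * ω j)| < 1 :=
        Int.abs_sub_lt_one_of_floor_eq_floor heq
      have h4 : |Int.fract (((a:ℕ):ℝ) * ω j) - Int.fract (((b:ℕ):ℝ) * ω j)| < 1 / M := by
        rw [lt_div_iff₀ hMR, ← abs_of_pos hMR, ← abs_mul]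
        calc |(Int.fract (((a:ℕ):ℝ) * ω j) - Int.fract (((b:ℕ):ℝ) * ω j)) * M|
            = |(M:ℝ) * Int.fract (((a:ℕ):ℝ) * ω j) - (M:ℝ) * Int.fract (((b:ℕ):ℝ) * ω j)| := by
              congr 1
              ring
          _ < 1 := h3
      have h5 : (((b:ℕ) - (a:ℕ) : ℕ) : ℝ) * ω j - k j
          = Int.fract (((b:ℕ):ℝ) * ω j) - Int.fract (((a:ℕ):ℝ) * ω j) := by
        rw [hsub, hk]
        simp only [Int.fract, Int.cast_sub]
        ring
      rw [h5, abs_sub_comm]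
      exact h4
    have hMd : 1 / (M:ℝ) ≤ d := by
      rw [div_le_iff₀ hMR]
      calc (1:ℝ) = d * (1/d) := by field_simp
        _ ≤ d * M := mul_le_mul_of_nonneg_left (Nat.le_ceil _) hd.le
    calc distZ (fun j => ((((b:ℕ) - (a:ℕ) : ℕ)) : ℝ) * ω j)
        ≤ supNorm (fun j => ((((b:ℕ) - (a:ℕ) : ℕ)) : ℝ) * ω j - k j) := distZ_le _ k
      _ < 1 / M := supNorm_lt hbound
      _ ≤ d := hMd
  rcases Nat.lt_or_ge (a : ℕ) (b : ℕ) with h | h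
  · exact key a b hfab h
  · exact key b a hfab.symm (by omega)

end aux

/-- `‖T_i(ω)·ω‖_ℤ ≥ 1/(T_i(ω) + T_{i+1}(ω))`. -/
theorem stmt2 {n : ℕ} (hn : 1 ≤ n) (ω : Fin n → ℝ) (hω : ¬ IsRationalVec ω) (i : ℕ) :
    distZ (fun j => (periods ω i : ℝ) * ω j) ≥
      1 / ((periods ω i : ℝ) + (periods ω (i + 1) : ℝ)) := by
  haveI : Nonempty (Fin n) := ⟨⟨0, hn⟩⟩
  have hdef : ∀ m : ℕ, periods ω (m + 1) = sInf {T : ℕ | 1 ≤ T ∧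
      distZ (fun j => (T : ℝ) * ω j) < distZ (fun j => (periods ω m : ℝ) * ω j)} :=
    fun m => rfl
  have hSmem : ∀ m : ℕ, 1 ≤ periods ω m → (1 ≤ periods ω (m + 1) ∧
      distZ (fun j => (periods ω (m + 1) : ℝ) * ω j) <
        distZ (fun j => (periods ω m : ℝ) * ω j)) := by
    intro m hm
    have hdm : 0 < distZ (fun j => (periods ω m : ℝ) * ω j) := distZ_pos hω hm
    obtain ⟨T, hT1, hT2⟩ := exists_small ω hdm
    have := Nat.sInf_mem (⟨T, hT1, hT2⟩ : {T : ℕ | 1 ≤ T ∧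
      distZ (fun j => (T : ℝ) * ω j) < distZ (fun j => (periods ω m : ℝ) * ω j)}.Nonempty)
    rw [← hdef m] at this
    exact this
  have hpos : ∀ m, 1 ≤ periods ω m := by
    intro m
    induction m with
    | zero => exact le_refl 1
    | succ k ih => exact (hSmem k ih).1
  have hmem := hSmem i (hpos i)
  -- periods are strictly increasing
  have hTlt : periods ω i < periods ω (i + 1) := by
    have hne : periods ω i ≠ periods ω (i + 1) := by
      intro heq
      rw [← heq] at hmem
      exact lt_irrefl _ hmem.2
    cases i with
    | zero =>
      have h0 : periods ω 0 = 1 := rfl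
      omega
    | succ k =>
      have hk := hSmem k (hpos k)
      have hmem' : periods ω (k + 1 + 1) ∈ {T : ℕ | 1 ≤ T ∧
          distZ (fun j => (T : ℝ) * ω j) < distZ (fun j => (periods ω k : ℝ) * ω j)} :=
        ⟨hmem.1, lt_trans hmem.2 hk.2⟩
      have hle : periods ω (k + 1) ≤ periods ω (k + 1 + 1) := by
        rw [hdef k]
        exact Nat.sInf_le hmem'
      omega
  -- notation
  set T := periods ω i with hT
  set T' := periods ω (i + 1) with hT'
  have hT0 : (0:ℝ) < T := by exact_mod_cast hpos i
  have hT'0 : (0:ℝ) < T' := by exact_mod_cast hmem.1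
  have hTT' : (T:ℝ) < (T':ℝ) := by exact_mod_cast hTlt
  by_contra hcon
  push_neg at hcon
  rw [lt_div_iff₀ (by linarith)] at hcon
  -- optimal lattice points
  set x : Fin n → ℝ := fun j => (T:ℝ) * ω j - round ((T:ℝ) * ω j) with hx
  set y : Fin n → ℝ := fun j => (T':ℝ) * ω j - round ((T':ℝ) * ω j) with hy
  have hdx : distZ (fun j => (T:ℝ) * ω j) = supNorm x := distZ_eq_round _
  have hdy : distZ (fun j => (T':ℝ) * ω j) = supNorm y := distZ_eq_round _
  set dI := distZ (fun j => (T:ℝ) * ω j) with hdI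
  set dI' := distZ (fun j => (T':ℝ) * ω j) with hdI'
  have hlt' : dI' < dI := hmem.2
  have hdI'pos : 0 < dI' := distZ_pos hω hmem.1
  have hxj : ∀ j, |x j| ≤ dI := by intro j; rw [hdx]; exact le_supNorm x j
  have hyj : ∀ j, |y j| ≤ dI' := by intro j; rw [hdy]; exact le_supNorm y j
  -- per-coordinate integer vanishes
  have hxlt : ∀ j, |x j| < dI' := by
    intro j
    have hNj : ((T:ℤ) * round ((T':ℝ) * ω j) - (T':ℤ) * round ((T:ℝ) * ω j) : ℝ)
        = (T':ℝ) * x j - (T:ℝ) * y j := by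
      rw [hx, hy]
      push_cast
      ring
    have habs : |((T:ℤ) * round ((T':ℝ) * ω j) - (T':ℤ) * round ((T:ℝ) * ω j) : ℝ)| < 1 := by
      rw [hNj]
      calc |(T':ℝ) * x j - (T:ℝ) * y j| ≤ |(T':ℝ) * x j| + |(T:ℝ) * y j| := abs_sub _ _
        _ = (T':ℝ) * |x j| + (T:ℝ) * |y j| := by
            rw [abs_mul, abs_mul, abs_of_pos hT'0, abs_of_pos hT0]
        _ ≤ (T':ℝ) * dI + (T:ℝ) * dI' :=
            add_le_add (mul_le_mul_of_nonneg_left (hxj j) hT'0.le)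
              (mul_le_mul_of_nonneg_left (hyj j) hT0.le)
        _ < (T':ℝ) * dI + (T:ℝ) * dI := by
            have := mul_lt_mul_of_pos_left hlt' hT0
            linarith
        _ = dI * ((T:ℝ) + (T':ℝ)) := by ring
        _ < 1 := hcon
    have hN0 : (T:ℤ) * round ((T':ℝ) * ω j) - (T':ℤ) * round ((T:ℝ) * ω j) = 0 := by
      have h6 : |(T:ℤ) * round ((T':ℝ) * ω j) - (T':ℤ) * round ((T:ℝ) * ω j)| < 1 := by
        exact_mod_cast habs
      exact Int.abs_lt_one_iff.mp h6
    have heq : (T':ℝ) * x j = (T:ℝ) * y j := by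
      have h0 : ((T:ℤ) * round ((T':ℝ) * ω j) - (T':ℤ) * round ((T:ℝ) * ω j) : ℝ) = 0 := by
        exact_mod_cast congrArg (fun z : ℤ => (z : ℝ)) hN0
      rw [hNj] at h0
      linarith
    have hmul : (T':ℝ) * |x j| < (T':ℝ) * dI' := by
      calc (T':ℝ) * |x j| = |(T':ℝ) * x j| := by rw [abs_mul, abs_of_pos hT'0]
        _ = |(T:ℝ) * y j| := by rw [heq]
        _ = (T:ℝ) * |y j| := by rw [abs_mul, abs_of_pos hT0]
        _ ≤ (T:ℝ) * dI' := mul_le_mul_of_nonneg_left (hyj j) hT0.le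
        _ < (T':ℝ) * dI' := mul_lt_mul_of_pos_right hTT' hdI'pos
    exact lt_of_mul_lt_mul_left hmul hT'0.le
  have : dI < dI' := by
    rw [hdx]
    exact supNorm_lt hxlt
  linarith
end

section
/- Let n ≥ 1 and let τ > 0 be a real number. For a positive integer T, let N(T) be the number of integer points w ∈ {0, 1, …, T−1}ⁿ for which there exists a nonzero k ∈ ℤⁿ with |k| ≤ T^{(1−τ)/(n+1)} and ⟨k,w⟩ ≡ 0 (mod T). Then N(T)/Tⁿ → 0 as T → ∞; in other words, the proportion of integer vectors w ∈ {0,…,T−1}ⁿ with e(w/T) ≤ T^{(1−τ)/(n+1)} tends to zero as T tends to infinity. -/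
open Finset

lemma fiber_bound (T : ℕ) (a b : ℤ) (ha : a ≠ 0) :
    ((univ : Finset (Fin T)).filter (fun x : Fin T => (T:ℤ) ∣ a * (x:ℤ) + b)).card
      ≤ 2 * a.natAbs + 1 := by
  set S := (univ : Finset (Fin T)).filter (fun x : Fin T => (T:ℤ) ∣ a * (x:ℤ) + b) with hS
  rcases S.eq_empty_or_nonempty with h | ⟨x₀, hx₀⟩
  · simp [h]
  have hdiv : ∀ x ∈ S, (T:ℤ) * ((a * (x:ℤ) + b) / T) = a * (x:ℤ) + b := by
    intro x hx
    exact Int.mul_ediv_cancel' (by simpa [hS] using hx)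
  set g : Fin T → ℤ := fun x => (a * (x:ℤ) + b) / T with hg
  have hginj : Set.InjOn g S := by
    intro x hx y hy hxy
    have hx' : x ∈ S := Finset.mem_coe.mp hx
    have hy' : y ∈ S := Finset.mem_coe.mp hy
    have e1 : a * (x:ℤ) + b = (T:ℤ) * g x := (hdiv x hx').symm
    rw [hxy] at e1
    have e2 := e1.trans (hdiv y hy')
    have : (x:ℤ) = (y:ℤ) := mul_left_cancel₀ ha (by linarith : a * (x:ℤ) = a * (y:ℤ))
    exact Fin.ext (by exact_mod_cast this)
  have hcard : S.card = (S.image g).card := (card_image_of_injOn hginj).symm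
  have hsub : S.image g ⊆ Finset.Icc (g x₀ - a.natAbs) (g x₀ + a.natAbs) := by
    intro q hq
    obtain ⟨x, hx, rfl⟩ := mem_image.mp hq
    have hT : 0 < (T:ℤ) := by
      have : (x : ℕ) < T := x.isLt
      omega
    have key : (T:ℤ) * (g x - g x₀) = a * ((x:ℤ) - (x₀:ℤ)) := by
      have h1 := hdiv x hx
      have h2 := hdiv x₀ hx₀
      simp only [hg] at *
      ring_nf
      ring_nf at h1 h2
      linarith
    have habs : |g x - g x₀| * T ≤ |a| * T := by
      have hxb : |(x:ℤ) - (x₀:ℤ)| ≤ (T:ℤ) := by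
        have := x.isLt; have := x₀.isLt
        rw [abs_le]; omega
      calc |g x - g x₀| * T = |(T:ℤ) * (g x - g x₀)| := by
            rw [abs_mul, abs_of_nonneg hT.le]; ring
        _ = |a| * |(x:ℤ) - (x₀:ℤ)| := by rw [key, abs_mul]
        _ ≤ |a| * T := by
            exact mul_le_mul_of_nonneg_left hxb (abs_nonneg a)
    have : |g x - g x₀| ≤ |a| := le_of_mul_le_mul_right habs hT
    rw [Finset.mem_Icc]
    rw [abs_le] at this
    rw [Int.abs_eq_natAbs] at this
    omega
  calc S.card = (S.image g).card := hcard
    _ ≤ (Finset.Icc (g x₀ - a.natAbs) (g x₀ + a.natAbs)).card := card_le_card hsub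
    _ ≤ 2 * a.natAbs + 1 := by rw [Int.card_Icc]; omega

lemma perk_bound {n : ℕ} (T : ℕ) (k : Fin n → ℤ) (i₀ : Fin n) (hk : k i₀ ≠ 0) :
    ((univ : Finset (Fin n → Fin T)).filter
       (fun w => (T:ℤ) ∣ ∑ i, k i * ((w i : ℕ) : ℤ))).card
      ≤ (2 * (k i₀).natAbs + 1) * T ^ (n - 1) := by
  classical
  set S := (univ : Finset (Fin n → Fin T)).filter
       (fun w => (T:ℤ) ∣ ∑ i, k i * ((w i : ℕ) : ℤ)) with hS
  set f : (Fin n → Fin T) → ({x : Fin n // x ≠ i₀} → Fin T) := fun w j => w j with hf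
  have hcard2 : ((univ : Finset ({x : Fin n // x ≠ i₀} → Fin T))).card = T ^ (n - 1) := by
    simp [Fintype.card_fun, Fintype.card_subtype_compl, Fintype.card_subtype_eq]
  have key := Finset.card_le_mul_card_image_of_maps_to
    (f := f) (s := S) (t := univ) (fun a _ => Finset.mem_univ _)
    (2 * (k i₀).natAbs + 1) ?_
  · calc S.card ≤ (2 * (k i₀).natAbs + 1) * (univ : Finset ({x : Fin n // x ≠ i₀} → Fin T)).card := key
      _ = (2 * (k i₀).natAbs + 1) * T ^ (n - 1) := by rw [hcard2]
  · intro g _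
    -- fiber over g injects into solutions of T ∣ k i₀ * x + B
    set B : ℤ := ∑ j : {x : Fin n // x ≠ i₀}, k j * ((g j : ℕ) : ℤ) with hB
    have hmaps : ∀ w ∈ S.filter (fun w => f w = g),
        w i₀ ∈ (univ : Finset (Fin T)).filter (fun x : Fin T => (T:ℤ) ∣ k i₀ * ((x:ℕ):ℤ) + B) := by
      intro w hw
      rw [Finset.mem_filter] at hw
      obtain ⟨hwS, hwg⟩ := hw
      rw [hS, Finset.mem_filter] at hwS
      have hsum : ∑ i, k i * ((w i : ℕ) : ℤ) = k i₀ * ((w i₀ : ℕ) : ℤ) + B := by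
        rw [Fintype.sum_eq_add_sum_compl i₀ (fun i => k i * ((w i : ℕ) : ℤ))]
        congr 1
        rw [hB, ← hwg]
        exact Finset.sum_subtype _ (fun x => by simp) _
      rw [Finset.mem_filter]
      exact ⟨Finset.mem_univ _, by rw [← hsum]; exact hwS.2⟩
    have hinj : Set.InjOn (fun w : Fin n → Fin T => w i₀) ↑(S.filter (fun w => f w = g)) := by
      intro w hw w' hw' h
      have hwg := (Finset.mem_filter.mp (Finset.mem_coe.mp hw)).2
      have hwg' := (Finset.mem_filter.mp (Finset.mem_coe.mp hw')).2
      funext j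
      by_cases hj : j = i₀
      · subst hj; exact h
      · exact (congrFun hwg ⟨j, hj⟩).trans (congrFun hwg' ⟨j, hj⟩).symm
    calc (S.filter (fun w => f w = g)).card
        ≤ ((univ : Finset (Fin T)).filter (fun x : Fin T => (T:ℤ) ∣ k i₀ * ((x:ℕ):ℤ) + B)).card :=
          Finset.card_le_card_of_injOn _ hmaps hinj
      _ ≤ 2 * (k i₀).natAbs + 1 := fiber_bound T (k i₀) B hk

open scoped Classical in
lemma total_bound {n : ℕ} (T M : ℕ) :
    ((univ : Finset (Fin n → Fin T)).filter
      (fun w : Fin n → Fin T => ∃ k : Fin n → ℤ, k ≠ 0 ∧ (∀ i, (k i).natAbs ≤ M) ∧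
        (T:ℤ) ∣ ∑ i, k i * ((w i : ℕ) : ℤ))).card
      ≤ (2 * M + 1) ^ n * ((2 * M + 1) * T ^ (n - 1)) := by
  classical
  set K := (Fintype.piFinset fun _ : Fin n => Finset.Icc (-(M:ℤ)) (M:ℤ)).filter
    (fun k => k ≠ 0) with hK
  have hsub : (univ : Finset (Fin n → Fin T)).filter
      (fun w : Fin n → Fin T => ∃ k : Fin n → ℤ, k ≠ 0 ∧ (∀ i, (k i).natAbs ≤ M) ∧
        (T:ℤ) ∣ ∑ i, k i * ((w i : ℕ) : ℤ))
      ⊆ K.biUnion (fun k => (univ : Finset (Fin n → Fin T)).filter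
          (fun w : Fin n → Fin T => (T:ℤ) ∣ ∑ i, k i * ((w i : ℕ) : ℤ))) := by
    intro w hw
    rw [Finset.mem_filter] at hw
    obtain ⟨-, k, hk0, hkM, hkd⟩ := hw
    refine Finset.mem_biUnion.mpr ⟨k, ?_, by simp [hkd]⟩
    rw [hK, Finset.mem_filter]
    refine ⟨Fintype.mem_piFinset.mpr fun i => ?_, hk0⟩
    have := hkM i
    rw [Finset.mem_Icc]
    omega
  calc _ ≤ (K.biUnion (fun k => (univ : Finset (Fin n → Fin T)).filter
          (fun w : Fin n → Fin T => (T:ℤ) ∣ ∑ i, k i * ((w i : ℕ) : ℤ)))).card := Finset.card_le_card hsub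
    _ ≤ ∑ k ∈ K, ((univ : Finset (Fin n → Fin T)).filter
          (fun w : Fin n → Fin T => (T:ℤ) ∣ ∑ i, k i * ((w i : ℕ) : ℤ))).card := Finset.card_biUnion_le
    _ ≤ ∑ _k ∈ K, (2 * M + 1) * T ^ (n - 1) := by
        refine Finset.sum_le_sum fun k hk => ?_
        rw [hK, Finset.mem_filter] at hk
        obtain ⟨hmem, hk0⟩ := hk
        obtain ⟨i₀, hi₀⟩ : ∃ i₀, k i₀ ≠ 0 := by
          by_contra h
          push_neg at h
          exact hk0 (funext h)
        calc _ ≤ (2 * (k i₀).natAbs + 1) * T ^ (n - 1) := perk_bound T k i₀ hi₀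
          _ ≤ (2 * M + 1) * T ^ (n - 1) := by
              have : (k i₀).natAbs ≤ M := by
                have := Fintype.mem_piFinset.mp hmem i₀
                rw [Finset.mem_Icc] at this
                omega
              exact Nat.mul_le_mul_right _ (by omega)
    _ = K.card * ((2 * M + 1) * T ^ (n - 1)) := by rw [Finset.sum_const, smul_eq_mul]
    _ ≤ (2 * M + 1) ^ n * ((2 * M + 1) * T ^ (n - 1)) := by
        refine Nat.mul_le_mul_right _ ?_
        calc K.card ≤ (Fintype.piFinset fun _ : Fin n => Finset.Icc (-(M:ℤ)) (M:ℤ)).card :=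
              Finset.card_filter_le _ _
          _ = (2 * M + 1) ^ n := by
              rw [Fintype.card_piFinset]
              simp only [Int.card_Icc]
              rw [Finset.prod_const, Finset.card_univ, Fintype.card_fin]
              congr 1
              omega

/-- the proportion of `w ∈ {0,…,T-1}ⁿ` with
`e(w/T) ≤ T^{(1-τ)/(n+1)}` tends to `0` as `T → ∞`. -/
theorem stmt12 {n : ℕ} (hn : 1 ≤ n) (τ : ℝ) (hτ : 0 < τ) :
    Filter.Tendsto (fun T : ℕ =>
      (Nat.card {w : Fin n → Fin T // ∃ k : Fin n → ℤ, k ≠ 0 ∧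
          (supNorm fun i => (k i : ℝ)) ≤ (T : ℝ) ^ ((1 - τ) / ((n : ℝ) + 1)) ∧
          (T : ℤ) ∣ ∑ i, k i * (w i : ℤ)} : ℝ) / (T : ℝ) ^ n)
      Filter.atTop (nhds 0) := by
  classical
  have hne : Nonempty (Fin n) := ⟨⟨0, hn⟩⟩
  set e : ℝ := (1 - τ) / ((n : ℝ) + 1) with he
  set ep : ℝ := max e 0 with hep
  have hnpos : (0:ℝ) < (n:ℝ) + 1 := by positivity
  have hmulE : ((n:ℝ) + 1) * e = 1 - τ := by rw [he]; field_simp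
  have hδ : 0 < 1 - ((n:ℝ)+1) * ep := by
    rcases le_or_gt e 0 with h | h
    · rw [hep, max_eq_right h]; simp
    · rw [hep, max_eq_left h.le]; rw [hmulE]; linarith
  apply squeeze_zero' (g := fun T : ℕ => 3^(n+1) * (T:ℝ)^(-(1 - ((n:ℝ)+1) * ep)))
  · filter_upwards with T; positivity
  · filter_upwards [Filter.eventually_ge_atTop 1] with T hT
    have hT1 : (1:ℝ) ≤ (T:ℝ) := by exact_mod_cast hT
    have hTpos : (0:ℝ) < (T:ℝ) := lt_of_lt_of_le zero_lt_one hT1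
    set M := ⌊(T:ℝ) ^ e⌋₊ with hM
    set P : (Fin n → Fin T) → Prop := fun w => ∃ k : Fin n → ℤ, k ≠ 0 ∧
          (supNorm fun i => (k i : ℝ)) ≤ (T : ℝ) ^ e ∧
          (T : ℤ) ∣ ∑ i, k i * ((w i : ℕ) : ℤ) with hP
    have hcard : Nat.card {w : Fin n → Fin T // P w} = (univ.filter P).card := by
      rw [Nat.card_eq_fintype_card, Fintype.card_subtype]
    have hPsub : univ.filter P ⊆ univ.filter
        (fun w : Fin n → Fin T => ∃ k : Fin n → ℤ, k ≠ 0 ∧ (∀ i, (k i).natAbs ≤ M) ∧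
          (T:ℤ) ∣ ∑ i, k i * ((w i : ℕ) : ℤ)) := by
      intro w hw
      rw [Finset.mem_filter] at hw ⊢
      obtain ⟨-, k, hk0, hksup, hkd⟩ := hw
      refine ⟨Finset.mem_univ _, k, hk0, fun i => ?_, hkd⟩
      have hbdd : BddAbove (Set.range fun i => |((k i : ℤ) : ℝ)|) :=
        Set.Finite.bddAbove (Set.finite_range _)
      have hs : |((k i : ℤ) : ℝ)| ≤ (T:ℝ)^e := le_trans (le_ciSup hbdd i) hksup
      apply Nat.le_floor
      rw [Nat.cast_natAbs, Int.cast_abs]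
      exact hs
    have h1 : (univ.filter P).card ≤ (2*M+1)^n * ((2*M+1) * T^(n-1)) :=
      le_trans (Finset.card_le_card hPsub) (total_bound T M)
    have h2 : (2*(M:ℝ)+1) ≤ 3*(T:ℝ)^ep := by
      have hM1 : (M:ℝ) ≤ (T:ℝ)^e := Nat.floor_le (by positivity)
      have hee : (T:ℝ)^e ≤ (T:ℝ)^ep :=
        Real.rpow_le_rpow_of_exponent_le hT1 (le_max_left _ _)
      have h1e : (1:ℝ) ≤ (T:ℝ)^ep := by
        have := Real.rpow_le_rpow_of_exponent_le hT1 (le_max_right e 0)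
        rwa [Real.rpow_zero] at this
      linarith
    rw [div_le_iff₀ (by positivity)]
    calc (Nat.card {w : Fin n → Fin T // P w} : ℝ)
        = ((univ.filter P).card : ℝ) := by rw [hcard]
      _ ≤ (((2*M+1)^n * ((2*M+1) * T^(n-1)) : ℕ) : ℝ) := by exact_mod_cast h1
      _ = (2*(M:ℝ)+1)^n * ((2*(M:ℝ)+1) * (T:ℝ)^(n-1)) := by push_cast; ring
      _ ≤ (3*(T:ℝ)^ep)^n * ((3*(T:ℝ)^ep) * (T:ℝ)^(n-1)) := by
          gcongr <;> linarith [h2, Nat.cast_nonneg (α := ℝ) M]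
      _ = 3^(n+1) * ((T:ℝ)^ep)^(n+1) * (T:ℝ)^(n-1) := by ring
      _ = 3 ^ (n + 1) * (T:ℝ) ^ (-(1 - ((n:ℝ)+1) * ep)) * (T:ℝ) ^ n := by
          rw [← Real.rpow_natCast ((T:ℝ)^ep) (n+1), ← Real.rpow_mul hTpos.le,
            ← Real.rpow_natCast (T:ℝ) (n-1), ← Real.rpow_natCast (T:ℝ) n,
            mul_assoc, mul_assoc, ← Real.rpow_add hTpos, ← Real.rpow_add hTpos]
          congr 1
          congr 1
          push_cast [Nat.cast_sub hn]
          ring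
  · have h := ((tendsto_rpow_neg_atTop hδ).comp tendsto_natCast_atTop_atTop).const_mul
      ((3:ℝ)^(n+1))
    simpa using h
end
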